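/- Let α > 0, X ∈ ℝ, Y > 0, and k ∈ ℝ² with k ≠ 0. Set A := (|k|² + 1)(α|k|² + 1) where |k|² = k₁² + k₂², and suppose 4YA > X². Then every complex root C of the quadratic A·C² + X·C + Y = 0 is non-real, its imaginary part satisfies |Im C| = √(4YA − X²)/(2A), and moreover |Im C| ≤ √(Y/α) / |k|². In particular, the growth rate of the linearised α-TQG thermal Rossby wave instability decays to zero at the rate |k|^{-2} as |k| → ∞. -/
import Mathlib


/-- Roots of the α-TQG dispersion quadratic A C² + X C + Y = 0 with
A = (|k|²+1)(α|k|²+1), Y > 0 and 4YA > X²: every complex root is non-real, its imaginary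
part has modulus √(4YA − X²)/(2A), and this is at most √(Y/α)/|k|², so the instability
growth rate decays like |k|^{-2}. -/
theorem stmt10 (α : ℝ) (hα : 0 < α) (X Y : ℝ) (hY : 0 < Y)
    (k : ℝ × ℝ) (hk : k ≠ 0)
    (A : ℝ) (hA : A = (k.1 ^ 2 + k.2 ^ 2 + 1) * (α * (k.1 ^ 2 + k.2 ^ 2) + 1))
    (hdisc : X ^ 2 < 4 * Y * A) :
    ∀ C : ℂ, (A : ℂ) * C ^ 2 + (X : ℂ) * C + (Y : ℂ) = 0 →
      C.im ≠ 0 ∧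
      |C.im| = Real.sqrt (4 * Y * A - X ^ 2) / (2 * A) ∧
      |C.im| ≤ Real.sqrt (Y / α) / (k.1 ^ 2 + k.2 ^ 2) := by
  intro C hC
  set s : ℝ := k.1 ^ 2 + k.2 ^ 2 with hs
  have hspos : 0 < s := by
    have h1 : k.1 ≠ 0 ∨ k.2 ≠ 0 := by
      by_contra hcon
      push_neg at hcon
      exact hk (Prod.ext hcon.1 hcon.2)
    rcases h1 with h1 | h1 <;> positivity
  have hApos : 0 < A := by rw [hA]; positivity
  have hAs : α * s ^ 2 ≤ A := by
    rw [hA]; nlinarith [hα.le, hspos.le]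
  set a : ℝ := C.re
  set b : ℝ := C.im
  have hre : A * (a * a - b * b) + X * a + Y = 0 := by
    have := congrArg Complex.re hC
    simpa [pow_two, Complex.mul_re, Complex.mul_im, Complex.add_re, Complex.add_im] using this
  have him : A * (a * b + b * a) + X * b = 0 := by
    have := congrArg Complex.im hC
    simpa [pow_two, Complex.mul_re, Complex.mul_im, Complex.add_re, Complex.add_im] using this
  have hb : b ≠ 0 := by
    intro h0
    rw [h0] at hre
    nlinarith [sq_nonneg (2 * A * a + X)]
  have ha : a = -X / (2 * A) := by
    have h2 : b * (2 * A * a + X) = 0 := by ring_nf; linarith [him]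
    have := (mul_eq_zero.mp h2).resolve_left hb
    field_simp
    linarith
  have h0 : 2 * A * a + X = 0 := by
    rw [ha]; field_simp; ring
  have h0sq : (2 * A * a + X) ^ 2 = 0 := by rw [h0]; ring
  have key : 4 * A ^ 2 * b ^ 2 = 4 * Y * A - X ^ 2 := by
    nlinarith [hre, h0sq, hApos]
  have hb2 : b ^ 2 = (4 * Y * A - X ^ 2) / (4 * A ^ 2) := by
    rw [eq_div_iff (by positivity)]; linarith [key]
  constructor
  · exact hb
  constructor
  · have : |b| = Real.sqrt (b ^ 2) := (Real.sqrt_sq_eq_abs b).symm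
    rw [this, hb2, show (4 : ℝ) * A ^ 2 = (2 * A) ^ 2 by ring,
      Real.sqrt_div (by nlinarith) _, Real.sqrt_sq (by linarith)]
  · have h1 : b ^ 2 ≤ (Y / α) / s ^ 2 := by
      have hYA : b ^ 2 ≤ Y / A := by
        rw [hb2, div_le_div_iff₀ (by positivity) hApos]
        nlinarith [sq_nonneg X, hApos]
      have h2' : Y / A ≤ Y / (α * s ^ 2) := by
        gcongr
      calc b ^ 2 ≤ Y / A := hYA
        _ ≤ Y / (α * s ^ 2) := h2'
        _ = (Y / α) / s ^ 2 := by rw [div_div]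
    have h2 : |b| = Real.sqrt (b ^ 2) := (Real.sqrt_sq_eq_abs b).symm
    rw [h2]
    calc Real.sqrt (b ^ 2) ≤ Real.sqrt ((Y / α) / s ^ 2) := Real.sqrt_le_sqrt h1
      _ = Real.sqrt (Y / α) / s := by
          rw [Real.sqrt_div (by positivity) _, Real.sqrt_sq hspos.le]
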